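/- Spectral invariants of the classical Gaudin Lax matrix Poisson-commute: on gl(r)^N with the product Lie–Poisson bracket, for pairwise distinct z_1,…,z_N and any points u,v ∈ ℂ \ {z_1,…,z_N} and any m,n ≥ 1, one has {Tr(L_G(u)^m), Tr(L_G(v)^n)} = 0 where L_G(z) = Σ_i X_i/(z−z_i). -/

import Mathlib

noncomputable section

/-- The phase space `gl(r)^N`: `N`-tuples of `r × r` complex matrices, realized as nested
functions (so that the `Pi` normed-space structure is available for differentiation). -/
abbrev GaudinPhase (N r : ℕ) := Fin N → Fin r → Fin r → ℂ

/-- The coordinate direction on `gl(r)^N` corresponding to the matrix entry `(a,b)` of the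
`i`-th matrix. -/
def gaudinBasis (N r : ℕ) (i : Fin N) (a b : Fin r) : GaudinPhase N r :=
  Pi.single i (Pi.single a (Pi.single b 1))

/-- The partial derivative `∂F/∂(X_i)_{ab}` of a function on `gl(r)^N`. -/
def gaudinPDeriv {N r : ℕ} (F : GaudinPhase N r → ℂ) (i : Fin N) (a b : Fin r)
    (X : GaudinPhase N r) : ℂ :=
  fderiv ℂ F X (gaudinBasis N r i a b)

/-- The product Lie–Poisson bracket on `gl(r)^N`, determined by
`{(X_i)_{ab}, (X_j)_{cd}} = δ_{ij} (δ_{cb} (X_i)_{ad} - δ_{ad} (X_i)_{cb})`: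
`{F,G}(X) = ∑_{i,a,b,c,d} (δ_{cb} (X_i)_{ad} - δ_{ad} (X_i)_{cb})
  ∂F/∂(X_i)_{ab} ∂G/∂(X_i)_{cd}`. -/
def gaudinPoisson {N r : ℕ} (F G : GaudinPhase N r → ℂ) (X : GaudinPhase N r) : ℂ :=
  ∑ i : Fin N, ∑ a : Fin r, ∑ b : Fin r, ∑ c : Fin r, ∑ d : Fin r,
    ((if c = b then X i a d else 0) - (if a = d then X i c b else 0)) *
      gaudinPDeriv F i a b X * gaudinPDeriv G i c d X

/-- The classical Gaudin Lax matrix `L_G(ζ) = ∑ i, X i / (ζ - z i)`. -/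
def gaudinLax {N r : ℕ} (z : Fin N → ℂ) (ζ : ℂ) (X : GaudinPhase N r) :
    Matrix (Fin r) (Fin r) ℂ :=
  ∑ i : Fin N, (ζ - z i)⁻¹ • Matrix.of (X i)

open Matrix

attribute [local instance] Matrix.linftyOpNormedAddCommGroup Matrix.linftyOpNormedRing
  Matrix.linftyOpNormedAlgebra

variable {r : ℕ}

def powD (m : ℕ) (M : Matrix (Fin r) (Fin r) ℂ) :
    Matrix (Fin r) (Fin r) ℂ →L[ℂ] Matrix (Fin r) (Fin r) ℂ :=
  LinearMap.toContinuousLinearMap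
    (∑ k ∈ Finset.range m, (LinearMap.mulLeft ℂ (M ^ k)) ∘ₗ (LinearMap.mulRight ℂ (M ^ (m - 1 - k))))

@[simp] lemma powD_apply (m : ℕ) (M H : Matrix (Fin r) (Fin r) ℂ) :
    powD m M H = ∑ k ∈ Finset.range m, M ^ k * H * M ^ (m - 1 - k) := by
  rw [powD]
  erw [LinearMap.coe_toContinuousLinearMap']
  rw [LinearMap.sum_apply]
  simp [LinearMap.mulLeft_apply, LinearMap.mulRight_apply, mul_assoc]

lemma hasFDerivAt_matpow (m : ℕ) (M : Matrix (Fin r) (Fin r) ℂ) :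
    HasFDerivAt (fun A : Matrix (Fin r) (Fin r) ℂ => A ^ m) (powD m M) M := by
  induction m with
  | zero =>
    have h0 : (powD 0 M) = 0 := by ext H; simp
    simpa [h0, pow_zero] using hasFDerivAt_const (1 : Matrix (Fin r) (Fin r) ℂ) M
  | succ k ih =>
    have h := ih.mul' (hasFDerivAt_id M)
    have he : (M ^ k • ContinuousLinearMap.id ℂ (Matrix (Fin r) (Fin r) ℂ)
        + (powD k M).smulRight M) = powD (k+1) M := by
      ext H : 1
      simp only [ContinuousLinearMap.add_apply, ContinuousLinearMap.smul_apply,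
        ContinuousLinearMap.id_apply, ContinuousLinearMap.smulRight_apply, powD_apply,
        smul_eq_mul, Finset.sum_range_succ, Finset.sum_mul]
      rw [add_comm]
      congr 1
      · refine Finset.sum_congr rfl fun i hi => ?_
        have hik := Finset.mem_range.mp hi
        rw [mul_assoc, ← pow_succ]
        congr 2
        omega
      · have : k + 1 - 1 - k = 0 := by omega
        simp [this]
    simp only [pow_succ]
    rw [← he]
    exact h

variable {N : ℕ}

def laxCLM (z : Fin N → ℂ) (ζ : ℂ) : GaudinPhase N r →L[ℂ] Matrix (Fin r) (Fin r) ℂ :=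
  LinearMap.toContinuousLinearMap
    (∑ i : Fin N, (ζ - z i)⁻¹ • ((Matrix.ofLinearEquiv ℂ).toLinearMap ∘ₗ LinearMap.proj i))

lemma laxCLM_apply (z : Fin N → ℂ) (ζ : ℂ) (X : GaudinPhase N r) :
    laxCLM z ζ X = gaudinLax z ζ X := by
  rw [laxCLM]
  erw [LinearMap.coe_toContinuousLinearMap']
  rw [LinearMap.sum_apply, gaudinLax]
  simp [LinearMap.smul_apply]

lemma laxCLM_basis (z : Fin N → ℂ) (ζ : ℂ) (i : Fin N) (a b : Fin r) :
    laxCLM z ζ (gaudinBasis N r i a b)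
      = (ζ - z i)⁻¹ • Matrix.of (Pi.single a (Pi.single b 1) : Fin r → Fin r → ℂ) := by
  rw [laxCLM_apply, gaudinLax, gaudinBasis]
  rw [Finset.sum_eq_single i]
  · simp
  · intro j _ hji
    simp [Pi.single_apply, hji]
  · simp

def traceCLM (r : ℕ) : Matrix (Fin r) (Fin r) ℂ →L[ℂ] ℂ :=
  LinearMap.toContinuousLinearMap (Matrix.traceLinearMap (Fin r) ℂ ℂ)

@[simp] lemma traceCLM_apply (C : Matrix (Fin r) (Fin r) ℂ) : traceCLM r C = C.trace := rfl

lemma trace_mul_single (C : Matrix (Fin r) (Fin r) ℂ) (a b : Fin r) :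
    (C * Matrix.of (Pi.single a (Pi.single b 1) : Fin r → Fin r → ℂ)).trace = C b a := by
  simp [Matrix.trace, Matrix.diag, Matrix.mul_apply, Pi.single_apply, ite_apply,
    mul_ite, ite_mul, Finset.sum_ite_eq, Finset.sum_ite_eq']

lemma gaudinLax_fun_eq (z : Fin N → ℂ) (ζ : ℂ) :
    ⇑(laxCLM (r := r) z ζ) = gaudinLax z ζ := funext (laxCLM_apply z ζ)

lemma hasFDerivAt_tracepow (z : Fin N → ℂ) (ζ : ℂ) (m : ℕ) (X : GaudinPhase N r) :
    HasFDerivAt (fun X => Matrix.trace (gaudinLax z ζ X ^ m))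
      ((traceCLM r).comp ((powD m (gaudinLax z ζ X)).comp (laxCLM z ζ))) X := by
  have hL' : HasFDerivAt (gaudinLax z ζ) (laxCLM (r := r) z ζ) X :=
    gaudinLax_fun_eq z ζ ▸ (laxCLM z ζ).hasFDerivAt
  have hp := (hasFDerivAt_matpow m (gaudinLax z ζ X)).comp X hL'
  exact (traceCLM r).hasFDerivAt.comp X hp

lemma pderiv_tracepow (z : Fin N → ℂ) (ζ : ℂ) (m : ℕ) (i : Fin N) (a b : Fin r)
    (X : GaudinPhase N r) :
    gaudinPDeriv (fun X => Matrix.trace (gaudinLax z ζ X ^ m)) i a b X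
      = (m : ℂ) * (ζ - z i)⁻¹ * (gaudinLax z ζ X ^ (m - 1)) b a := by
  rw [gaudinPDeriv, (hasFDerivAt_tracepow z ζ m X).fderiv]
  set M := gaudinLax z ζ X
  simp only [ContinuousLinearMap.coe_comp', Function.comp_apply, laxCLM_basis,
    _root_.map_smul, powD_apply, traceCLM_apply, Matrix.trace_smul, Matrix.trace_sum,
    smul_eq_mul, Finset.mul_sum]
  have h1 : ∀ k ∈ Finset.range m,
      (ζ - z i)⁻¹ * (M ^ k * Matrix.of (Pi.single a (Pi.single b 1) : Fin r → Fin r → ℂ)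
        * M ^ (m - 1 - k)).trace = (ζ - z i)⁻¹ * (M ^ (m-1)) b a := by
    intro k hk
    have hk' := Finset.mem_range.mp hk
    rw [Matrix.trace_mul_cycle, ← pow_add]
    have h2 : m - 1 - k + k = m - 1 := by omega
    rw [h2, trace_mul_single]
  rw [Finset.sum_congr rfl h1, Finset.sum_const, Finset.card_range, nsmul_eq_mul]
  ring
variable {r : ℕ}
theorem quad_sum (Y A B : Matrix (Fin r) (Fin r) ℂ) (α β : ℂ) :
    (∑ a : Fin r, ∑ b : Fin r, ∑ c : Fin r, ∑ d : Fin r,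
      ((if c = b then Y a d else 0) - (if a = d then Y c b else 0)) * (α * A b a) * (β * B d c))
    = α * β * ((Y * B * A).trace - (Y * A * B).trace) := by
  simp only [sub_mul, ite_mul, zero_mul, Finset.sum_sub_distrib, Finset.sum_ite_irrel,
    Finset.sum_const_zero, Finset.sum_ite_eq, Finset.sum_ite_eq', Finset.mem_univ, if_true]
  have t1 : (Y * B * A).trace = ∑ x : Fin r, ∑ x1 : Fin r, ∑ x2 : Fin r,
      Y x x2 * B x2 x1 * A x1 x := by
    simp [Matrix.trace, Matrix.diag, Matrix.mul_apply, Finset.sum_mul]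
  have t2 : (Y * A * B).trace = ∑ x : Fin r, ∑ x1 : Fin r, ∑ x2 : Fin r,
      Y x2 x1 * A x1 x * B x x2 := by
    have e : (Y * A * B).trace = ∑ p : Fin r, ∑ q : Fin r, ∑ s : Fin r,
        Y p s * A s q * B q p := by
      simp [Matrix.trace, Matrix.diag, Matrix.mul_apply, Finset.sum_mul]
    rw [e, Finset.sum_comm]
    refine Finset.sum_congr rfl fun q _ => ?_
    rw [Finset.sum_comm]
  rw [t1, t2, mul_sub, Finset.mul_sum, Finset.mul_sum]
  congr 1 <;>
  · refine Finset.sum_congr rfl fun x _ => ?_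
    rw [Finset.mul_sum]
    refine Finset.sum_congr rfl fun y _ => ?_
    rw [Finset.mul_sum]
    refine Finset.sum_congr rfl fun w _ => ?_
    ring

/-- Spectral invariants of the classical Gaudin Lax matrix Poisson-commute: on `gl(r)^N`
with the product Lie–Poisson bracket, for pairwise distinct `z 1, …, z N`, points
`u, v ∉ {z i}` and `m, n ≥ 1`, one has `{Tr (L_G(u)^m), Tr (L_G(v)^n)} = 0`. -/
theorem gaudin_spectral_invariants_poisson_commute
    {N r : ℕ} (z : Fin N → ℂ) (hz : Function.Injective z)
    (u v : ℂ) (hu : ∀ i, u ≠ z i) (hv : ∀ i, v ≠ z i)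
    (m n : ℕ) (hm : 1 ≤ m) (hn : 1 ≤ n) :
    ∀ X : GaudinPhase N r,
      gaudinPoisson (fun X => Matrix.trace (gaudinLax z u X ^ m))
        (fun X => Matrix.trace (gaudinLax z v X ^ n)) X = 0 := by
  intro X
  set M := gaudinLax z u X with hM
  set P := gaudinLax z v X with hP
  set A := M ^ (m - 1) with hA
  set B := P ^ (n - 1) with hB
  rw [gaudinPoisson]
  simp only [pderiv_tracepow]
  have key : ∀ i : Fin N, (∑ a : Fin r, ∑ b : Fin r, ∑ c : Fin r, ∑ d : Fin r,
      ((if c = b then X i a d else 0) - (if a = d then X i c b else 0)) *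
        ((m : ℂ) * (u - z i)⁻¹ * A b a) * ((n : ℂ) * (v - z i)⁻¹ * B d c))
      = ((m : ℂ) * (u - z i)⁻¹) * ((n : ℂ) * (v - z i)⁻¹) *
        ((Matrix.of (X i) * B * A).trace - (Matrix.of (X i) * A * B).trace) := by
    intro i
    exact quad_sum (Matrix.of (X i)) A B _ _
  rw [Finset.sum_congr rfl fun i _ => key i]
  set C := B * A - A * B with hC
  have htr : ∀ Q : Matrix (Fin r) (Fin r) ℂ,
      (Q * B * A).trace - (Q * A * B).trace = (Q * C).trace := by
    intro Q
    simp [hC, Matrix.mul_sub, Matrix.trace_sub, mul_assoc]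
  simp only [htr]
  -- case u = v
  by_cases huv : u = v
  · have hMP : P = M := by rw [hM, hP, huv]
    have hCz : C = 0 := by
      rw [hC, hA, hB, hMP, ← pow_add, ← pow_add, Nat.add_comm]
      simp
    simp [hCz]
  -- case u ≠ v : partial fractions
  · have hMA : M * A = M ^ m := by
      rw [hA, ← pow_succ']
      congr 1
      omega
    have hAM : A * M = M ^ m := by
      rw [hA, ← pow_succ]
      congr 1
      omega
    have hPB : P * B = P ^ n := by
      rw [hB, ← pow_succ']
      congr 1
      omega
    have hBP : B * P = P ^ n := by
      rw [hB, ← pow_succ]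
      congr 1
      omega
    have htrM : (M * C).trace = 0 := by
      rw [hC, Matrix.mul_sub, Matrix.trace_sub, ← mul_assoc, ← mul_assoc,
        Matrix.trace_mul_cycle M B A, hAM, hMA, sub_self]
    have htrP : (P * C).trace = 0 := by
      rw [hC, Matrix.mul_sub, Matrix.trace_sub, ← mul_assoc, ← mul_assoc, hPB,
        Matrix.trace_mul_cycle P A B, hBP, sub_self]
    have hsum : ∀ (W : Matrix (Fin r) (Fin r) ℂ) (ζ : ℂ),
        (∑ i : Fin N, (ζ - z i)⁻¹ * (Matrix.of (X i) * W).trace)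
          = ((gaudinLax z ζ X) * W).trace := by
      intro W ζ
      rw [gaudinLax, Finset.sum_mul, Matrix.trace_sum]
      refine Finset.sum_congr rfl fun j _ => ?_
      rw [show ((ζ - z j)⁻¹ • Matrix.of (X j) : Matrix (Fin r) (Fin r) ℂ) * W
          = (ζ - z j)⁻¹ • (Matrix.of (X j) * W) from Matrix.smul_mul _ _ _,
        Matrix.trace_smul, smul_eq_mul]
    have hc : ∀ i, (u - z i)⁻¹ * (v - z i)⁻¹
        = (v - u)⁻¹ * ((u - z i)⁻¹ - (v - z i)⁻¹) := by
      intro i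
      have h1 : u - z i ≠ 0 := sub_ne_zero.mpr (hu i)
      have h2 : v - z i ≠ 0 := sub_ne_zero.mpr (hv i)
      have h3 : v - u ≠ 0 := sub_ne_zero.mpr fun h => huv h.symm
      field_simp
      ring
    have step : ∀ i : Fin N,
        ((m : ℂ) * (u - z i)⁻¹) * ((n : ℂ) * (v - z i)⁻¹) * (Matrix.of (X i) * C).trace
        = ((m : ℂ) * (n : ℂ) * (v - u)⁻¹) *
            ((u - z i)⁻¹ * (Matrix.of (X i) * C).trace
              - (v - z i)⁻¹ * (Matrix.of (X i) * C).trace) := by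
      intro i
      have := hc i
      calc ((m : ℂ) * (u - z i)⁻¹) * ((n : ℂ) * (v - z i)⁻¹) * (Matrix.of (X i) * C).trace
          = (m : ℂ) * (n : ℂ) * ((u - z i)⁻¹ * (v - z i)⁻¹) * (Matrix.of (X i) * C).trace := by
            ring
        _ = _ := by rw [this]; ring
    rw [Finset.sum_congr rfl fun i _ => step i, ← Finset.mul_sum, Finset.sum_sub_distrib,
      hsum C u, hsum C v, htrM, htrP, sub_self, mul_zero]

end
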